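/- Let V be a finite-dimensional complex vector space, let f be a linear endomorphism of V that is not nilpotent, and let λ ∈ ℂ. If λ • f is similar to f, then |λ| = 1. -/

import Mathlib

open Module Polynomial

/-- A non-nilpotent endomorphism of a finite-dimensional vector space over an
algebraically closed field has a nonzero eigenvalue. -/
lemma exists_ne_zero_eigenvalue {V : Type*} [AddCommGroup V] [Module ℂ V]
    [FiniteDimensional ℂ V] (f : V →ₗ[ℂ] V) (hf : ¬ IsNilpotent f) :
    ∃ μ : ℂ, μ ≠ 0 ∧ Module.End.HasEigenvalue f μ := by
  rcases subsingleton_or_nontrivial V with hV | hV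
  · exact absurd ⟨1, by ext v; exact Subsingleton.elim _ _⟩ hf
  by_contra hcon
  push_neg at hcon
  apply hf
  have hint : IsIntegral ℂ f := LinearMap.isIntegral f
  have hne : minpoly ℂ f ≠ 0 := minpoly.ne_zero hint
  have hroots : ∀ μ : ℂ, (minpoly ℂ f).IsRoot μ → μ = 0 := by
    intro μ hμ
    by_contra hμ0
    exact hcon μ hμ0 (Module.End.hasEigenvalue_of_isRoot hμ)
  have hmonic : (minpoly ℂ f).Monic := minpoly.monic hint
  have hsp : (minpoly ℂ f).Splits := IsAlgClosed.splits _
  have hcard : Multiset.card (minpoly ℂ f).roots = (minpoly ℂ f).natDegree :=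
    (Polynomial.splits_iff_card_roots).mp hsp
  have hrep : (minpoly ℂ f).roots =
      Multiset.replicate (minpoly ℂ f).natDegree (0 : ℂ) := by
    rw [Multiset.eq_replicate]
    exact ⟨hcard, fun x hx => hroots x (isRoot_of_mem_roots hx)⟩
  have hsplit : (minpoly ℂ f) = X ^ (minpoly ℂ f).natDegree := by
    have := hsp.eq_prod_roots_of_monic hmonic
    rw [hrep] at this
    simpa [Multiset.map_replicate, Multiset.prod_replicate] using this
  have : (aeval f) (minpoly ℂ f) = 0 := minpoly.aeval ℂ f
  rw [hsplit] at this
  simp only [map_pow, aeval_X] at this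
  exact ⟨_, this⟩

theorem stmt_2 {V : Type*} [AddCommGroup V] [Module ℂ V] [FiniteDimensional ℂ V]
    (f : V →ₗ[ℂ] V) (hf : ¬ IsNilpotent f) (l : ℂ)
    (h : ∃ u : V ≃ₗ[ℂ] V, l • f = u.toLinearMap ∘ₗ f ∘ₗ u.symm.toLinearMap) :
    ‖l‖ = 1 := by
  obtain ⟨u, hu⟩ := h
  -- l ≠ 0
  have hl0 : l ≠ 0 := by
    rintro rfl
    apply hf
    have hfz : f = 0 := by
      have h0 : (0 : V →ₗ[ℂ] V) = u.toLinearMap ∘ₗ f ∘ₗ u.symm.toLinearMap := by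
        simpa using hu
      ext v
      have := congrArg (fun g : V →ₗ[ℂ] V => g (u v)) h0
      simpa using this.symm
    rw [hfz]
    exact IsNilpotent.zero
  -- eigenvalues are preserved under scaling by l
  have key : ∀ μ : ℂ, Module.End.HasEigenvalue f μ → Module.End.HasEigenvalue f (l * μ) := by
    intro μ hμ
    obtain ⟨v, hv⟩ := hμ.exists_hasEigenvector
    have hfv : f v = μ • v := hv.apply_eq_smul
    refine Module.End.hasEigenvalue_of_hasEigenvector (x := u.symm v)
      ⟨?_, by simpa using hv.right⟩
    rw [Module.End.mem_eigenspace_iff]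
    have h2 := congrArg (fun g : V →ₗ[ℂ] V => g v) hu
    simp only [LinearMap.comp_apply, LinearEquiv.coe_coe, LinearMap.smul_apply] at h2
    calc f (u.symm v) = u.symm (l • f v) := by rw [h2]; simp
      _ = (l * μ) • u.symm v := by rw [hfv, smul_smul, map_smul]
  obtain ⟨μ, hμ0, hμ⟩ := exists_ne_zero_eigenvalue f hf
  -- all l ^ n * μ are eigenvalues
  have hall : ∀ n : ℕ, Module.End.HasEigenvalue f (l ^ n * μ) := by
    intro n
    induction n with
    | zero => simpa using hμ
    | succ n ih =>
      have := key _ ih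
      rwa [← mul_assoc, mul_comm l (l ^ n), ← pow_succ] at this
  -- eigenvalues are roots of the minimal polynomial, hence finite in number
  have hint : IsIntegral ℂ f := LinearMap.isIntegral f
  have hfin : {x : ℂ | (minpoly ℂ f).IsRoot x}.Finite :=
    Polynomial.finite_setOf_isRoot (minpoly.ne_zero hint)
  by_contra habs
  set r := ‖l‖ with hr
  have hrpos : 0 < r := by simpa [hr, norm_pos_iff] using hl0
  have hrinj : Function.Injective (fun n : ℕ => r ^ n) := by
    rcases lt_or_gt_of_ne habs with hlt | hgt
    · have hA : StrictAnti (fun n : ℕ => r ^ n) := fun m n h =>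
        pow_lt_pow_right_of_lt_one₀ hrpos hlt h
      exact hA.injective
    · exact (pow_right_strictMono₀ hgt).injective
  have hinj : Function.Injective (fun n : ℕ => l ^ n * μ) := by
    intro m n hmn
    have : r ^ m = r ^ n := by
      have := congrArg norm hmn
      simpa [norm_mul, norm_pow, hμ0] using this
    exact hrinj this
  have hmem : ∀ n : ℕ, l ^ n * μ ∈ {x : ℂ | (minpoly ℂ f).IsRoot x} := fun n =>
    Module.End.isRoot_of_hasEigenvalue (hall n)
  exact (Set.infinite_of_injective_forall_mem hinj hmem) hfin
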